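/- Assume t(n) ≥ 2 for all n ≥ 1. Then for every natural number n₀ ≥ 1, μ(⋂_{n ≤ n₀} A(n)^c) ≥ 1 − 16·∑_{n=1}^{n₀} δ(n). -/

import Mathlib

open MeasureTheory

/-- `H(n, τ) = min {k ∈ ℕ, k ≥ 1 : t(n+k)/t(n) ≥ τ}`. -/
noncomputable def Hfun (t : ℕ → ℝ) (n : ℕ) (τ : ℝ) : ℕ :=
  sInf {k : ℕ | 1 ≤ k ∧ τ ≤ t (n + k) / t n}

/-- `l(n) = ⌊log₂(t(n)/(2 δ(n)))⌋`. -/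
noncomputable def lfun (t δ : ℕ → ℝ) (n : ℕ) : ℤ :=
  ⌊Real.logb 2 (t n / (2 * δ n))⌋

/-- The dyadic interval `[b/2^{l(n)}, (b+1)/2^{l(n)}]`. -/
noncomputable def dyadic (t δ : ℕ → ℝ) (n : ℕ) (b : ℤ) : Set ℝ :=
  Set.Icc ((b : ℝ) / (2 : ℝ) ^ lfun t δ n) (((b : ℝ) + 1) / (2 : ℝ) ^ lfun t δ n)

/-- `E(n,a) = [a/t(n) − δ(n)/t(n), a/t(n) + δ(n)/t(n)]`. -/
noncomputable def Eset (t δ : ℕ → ℝ) (n : ℕ) (a : ℤ) : Set ℝ :=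
  Set.Icc ((a : ℝ) / t n - δ n / t n) ((a : ℝ) / t n + δ n / t n)

/-- `A(n) ⊆ [0,1]`: the union of the dyadic intervals `[b/2^{l(n)}, (b+1)/2^{l(n)}]`
(`b ∈ ℤ`) that intersect `⋃_{0 ≤ a ≤ ⌈t(n)⌉} E(n,a) ∩ [0,1]`. -/
noncomputable def Aset (t δ : ℕ → ℝ) (n : ℕ) : Set ℝ :=
  (⋃ b ∈ {b : ℤ | (dyadic t δ n b ∩
      ((⋃ a ∈ Set.Icc (0 : ℤ) ⌈t n⌉, Eset t δ n a) ∩ Set.Icc (0 : ℝ) 1)).Nonempty},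
    dyadic t δ n b) ∩ Set.Icc (0 : ℝ) 1

/-- `A(n)^c = [0,1] \ A(n)`. -/
noncomputable def Acomp (t δ : ℕ → ℝ) (n : ℕ) : Set ℝ :=
  Set.Icc (0 : ℝ) 1 \ Aset t δ n

lemma vol_Aset_le (t δ : ℕ → ℝ) (n : ℕ) (ht : 2 ≤ t n) (hδ : 0 < δ n) :
    volume (Aset t δ n) ≤ ENNReal.ofReal (16 * δ n) := by
  set l := lfun t δ n with hl
  set K := (2:ℝ) ^ l with hKdef
  have hK0 : (0:ℝ) < K := zpow_pos (by norm_num) l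
  have ht0 : (0:ℝ) < t n := by linarith
  have hx0 : (0:ℝ) < t n / (2 * δ n) := div_pos ht0 (by positivity)
  have hK1 : K ≤ t n / (2 * δ n) := by
    calc K = (2:ℝ) ^ ((l:ℝ)) := (Real.rpow_intCast 2 l).symm
      _ ≤ (2:ℝ) ^ (Real.logb 2 (t n / (2 * δ n))) :=
          Real.rpow_le_rpow_of_exponent_le one_le_two (Int.floor_le _)
      _ = t n / (2 * δ n) := Real.rpow_logb two_pos (by norm_num) hx0
  have hK2 : t n / (2 * δ n) / 2 < K := by
    calc t n / (2 * δ n) / 2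
        = (2:ℝ) ^ (Real.logb 2 (t n / (2 * δ n)) - 1) := by
          rw [Real.rpow_sub two_pos, Real.rpow_logb two_pos (by norm_num) hx0, Real.rpow_one]
      _ < (2:ℝ) ^ ((l:ℝ)) := by
          apply Real.rpow_lt_rpow_of_exponent_lt one_lt_two
          have := Int.sub_one_lt_floor (Real.logb 2 (t n / (2 * δ n)))
          exact_mod_cast this
      _ = K := Real.rpow_intCast 2 l
  -- multiplied-out versions
  have hK1' : 2 * δ n * K ≤ t n := by
    rw [le_div_iff₀ (by positivity : (0:ℝ) < 2 * δ n)] at hK1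
    nlinarith [hK1]
  have hK2' : t n < 4 * δ n * K := by
    rw [div_lt_iff₀ (by norm_num : (0:ℝ) < 2), div_lt_iff₀ (by positivity : (0:ℝ) < 2 * δ n)] at hK2
    nlinarith [hK2]
  have hsub : Aset t δ n ⊆ ⋃ a ∈ Finset.Icc (0:ℤ) ⌈t n⌉,
      Set.Icc ((⌈((a:ℝ)/t n - δ n/t n)*K - 1⌉ : ℝ)/K)
              ((⌈((a:ℝ)/t n - δ n/t n)*K - 1⌉ : ℝ)/K + 8*δ n/t n) := by
    rintro x ⟨hxU, hx01⟩
    simp only [Set.mem_iUnion, Set.mem_setOf_eq] at hxU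
    obtain ⟨b, ⟨y, hyd, hyE, hy01⟩, hxb⟩ := hxU
    simp only [Set.mem_iUnion] at hyE
    obtain ⟨a, ha, hya⟩ := hyE
    obtain ⟨hyd1, hyd2⟩ := hyd
    obtain ⟨hya1, hya2⟩ := hya
    obtain ⟨hxb1, hxb2⟩ := hxb
    set b₀ : ℤ := ⌈((a:ℝ)/t n - δ n/t n)*K - 1⌉ with hb₀
    have hb0le : (b₀:ℝ) ≤ (b:ℝ) := by
      have h1 : ((a:ℝ)/t n - δ n/t n)*K ≤ (b:ℝ) + 1 := by
        rw [← le_div_iff₀ hK0]; linarith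
      exact_mod_cast Int.ceil_le.mpr (by linarith)
    have hble : (b:ℝ) ≤ ((a:ℝ)/t n + δ n/t n)*K := by
      rw [← div_le_iff₀ hK0]; linarith
    have hceilge := Int.le_ceil (((a:ℝ)/t n - δ n/t n)*K - 1)
    rw [← hb₀] at hceilge
    have hjb : ((b:ℝ) - (b₀:ℝ)) * t n ≤ 2 * δ n * K + t n := by
      have h2 : (((a:ℝ)/t n + δ n/t n)*K - (((a:ℝ)/t n - δ n/t n)*K - 1)) * t n
          = 2 * δ n * K + t n := by field_simp; ring
      nlinarith [sub_le_sub hble hceilge, mul_le_mul_of_nonneg_right (sub_le_sub hble hceilge) ht0.le]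
    have key : (b:ℝ) + 1 - (b₀:ℝ) ≤ 8 * δ n / t n * K := by
      have h8 : 8 * δ n / t n * K = 8 * (δ n * K) / t n := by ring
      rcases le_or_gt (t n) (2 * δ n * K) with hc | hc
      · -- t ≤ 2δK : crude bound b+1-b₀ ≤ 2δK/t + 2 ≤ 6δK/t suffices
        rw [h8, le_div_iff₀ ht0]
        nlinarith [hjb, hc, ht0]
      · -- 2δK < t : b - b₀ < 2 so b - b₀ ≤ 1
        have hlt : ((b - b₀ : ℤ):ℝ) < 2 := by
          push_cast
          nlinarith [hjb, hc, ht0]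
        have h1 : (b:ℝ) - b₀ ≤ 1 := by
          have : (b - b₀ : ℤ) ≤ 1 := by
            have : (b - b₀ : ℤ) < 2 := by exact_mod_cast hlt
            omega
          exact_mod_cast this
        have h2 : 2 < 8 * δ n / t n * K := by
          rw [h8, lt_div_iff₀ ht0]; nlinarith
        linarith
    simp only [Set.mem_iUnion]
    refine ⟨a, ?_, ?_, ?_⟩
    · rw [Finset.mem_Icc]; exact ha
    · calc (b₀:ℝ)/K ≤ (b:ℝ)/K := by gcongr
        _ ≤ x := hxb1
    · calc x ≤ ((b:ℝ)+1)/K := hxb2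
        _ ≤ (b₀:ℝ)/K + 8*δ n/t n := by
            calc ((b:ℝ)+1)/K = (b₀:ℝ)/K + ((b:ℝ)+1-(b₀:ℝ))/K := by ring
              _ ≤ (b₀:ℝ)/K + (8*δ n/t n*K)/K := by gcongr
              _ = (b₀:ℝ)/K + 8*δ n/t n := by
                  rw [mul_div_assoc, div_self (ne_of_gt hK0), mul_one]
  calc volume (Aset t δ n)
      ≤ volume (⋃ a ∈ Finset.Icc (0:ℤ) ⌈t n⌉,
          Set.Icc ((⌈((a:ℝ)/t n - δ n/t n)*K - 1⌉ : ℝ)/K)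
                  ((⌈((a:ℝ)/t n - δ n/t n)*K - 1⌉ : ℝ)/K + 8*δ n/t n)) := measure_mono hsub
    _ ≤ ∑ a ∈ Finset.Icc (0:ℤ) ⌈t n⌉, volume (Set.Icc ((⌈((a:ℝ)/t n - δ n/t n)*K - 1⌉ : ℝ)/K)
                  ((⌈((a:ℝ)/t n - δ n/t n)*K - 1⌉ : ℝ)/K + 8*δ n/t n)) := measure_biUnion_finset_le _ _
    _ = ∑ a ∈ Finset.Icc (0:ℤ) ⌈t n⌉, ENNReal.ofReal (8*δ n/t n) := by
        simp [Real.volume_Icc]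
    _ = (Finset.Icc (0:ℤ) ⌈t n⌉).card • ENNReal.ofReal (8*δ n/t n) := Finset.sum_const _
    _ ≤ ENNReal.ofReal (16 * δ n) := by
        rw [nsmul_eq_mul, ← ENNReal.ofReal_natCast, ← ENNReal.ofReal_mul (by positivity)]
        apply ENNReal.ofReal_le_ofReal
        have hceil : (⌈t n⌉ : ℝ) ≤ t n + 1 := by
          have := Int.ceil_lt_add_one (t n); linarith
        have hcpos : (0:ℤ) ≤ ⌈t n⌉ + 1 := by
          have : (1:ℤ) ≤ ⌈t n⌉ := by exact_mod_cast Int.le_ceil_iff.mpr (by norm_num; linarith)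
          linarith
        have hcard : ((Finset.Icc (0:ℤ) ⌈t n⌉).card : ℝ) ≤ t n + 2 := by
          rw [Int.card_Icc]
          have h0 : (0:ℤ) ≤ ⌈t n⌉ + 1 - 0 := by linarith
          have he : (((⌈t n⌉ + 1 - 0).toNat : ℤ) : ℝ) = ((⌈t n⌉:ℝ) + 1) := by
            rw [Int.toNat_of_nonneg h0]; push_cast; ring
          have he2 : (((⌈t n⌉ + 1 - 0).toNat : ℕ) : ℝ) = (((⌈t n⌉ + 1 - 0).toNat : ℤ) : ℝ) := by
            push_cast; ring
          rw [he2, he]; linarith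
        have h8 : (0:ℝ) ≤ 8*δ n/t n := by positivity
        calc ((Finset.Icc (0:ℤ) ⌈t n⌉).card : ℝ) * (8*δ n/t n)
            ≤ (t n + 2) * (8*δ n/t n) := by gcongr
          _ ≤ (2 * t n) * (8*δ n/t n) := by gcongr; linarith
          _ = 16 * δ n := by field_simp; ring

/-- `μ(⋂_{n ≤ n₀} A(n)^c) ≥ 1 − 16 ∑_{n=1}^{n₀} δ(n)` when `t(n) ≥ 2` for all `n ≥ 1`. -/
theorem measure_iInter_Acomp_ge
    (t : ℕ → ℝ)
    (htinc : ∀ n : ℕ, 1 ≤ n → t n < t (n + 1))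
    (htlim : Filter.Tendsto t Filter.atTop Filter.atTop)
    (δ : ℕ → ℝ) (hδpos : ∀ n, 0 < δ n) (hδanti : Antitone δ)
    (ht2 : ∀ n : ℕ, 1 ≤ n → 2 ≤ t n)
    (n₀ : ℕ) (hn₀ : 1 ≤ n₀) :
    ENNReal.ofReal (1 - 16 * ∑ n ∈ Finset.Icc 1 n₀, δ n) ≤
      volume (⋂ n ∈ Finset.Icc 1 n₀, Acomp t δ n) := by
  set U : Set ℝ := ⋃ n ∈ Finset.Icc 1 n₀, Aset t δ n with hU
  have hIcap : (⋂ n ∈ Finset.Icc 1 n₀, Acomp t δ n) = Set.Icc (0:ℝ) 1 \ U := by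
    ext x
    simp only [hU, Acomp, Set.mem_iInter, Set.mem_diff, Set.mem_iUnion, not_exists]
    constructor
    · intro h
      refine ⟨(h 1 (by simp [Finset.mem_Icc, hn₀])).1, fun n hn => (h n hn).2⟩
    · intro h n hn
      exact ⟨h.1, h.2 n hn⟩
  have hS0 : (0:ℝ) ≤ ∑ n ∈ Finset.Icc 1 n₀, δ n :=
    Finset.sum_nonneg fun n _ => (hδpos n).le
  have hvolU : volume U ≤ ENNReal.ofReal (16 * ∑ n ∈ Finset.Icc 1 n₀, δ n) := by
    calc volume U ≤ ∑ n ∈ Finset.Icc 1 n₀, volume (Aset t δ n) :=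
          measure_biUnion_finset_le _ _
      _ ≤ ∑ n ∈ Finset.Icc 1 n₀, ENNReal.ofReal (16 * δ n) := by
          refine Finset.sum_le_sum fun n hn => ?_
          rw [Finset.mem_Icc] at hn
          exact vol_Aset_le t δ n (ht2 n hn.1) (hδpos n)
      _ = ENNReal.ofReal (∑ n ∈ Finset.Icc 1 n₀, 16 * δ n) :=
          (ENNReal.ofReal_sum_of_nonneg fun n _ => by linarith [hδpos n]).symm
      _ = ENNReal.ofReal (16 * ∑ n ∈ Finset.Icc 1 n₀, δ n) := by
          rw [Finset.mul_sum]
  rw [hIcap]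
  set S : ℝ := 16 * ∑ n ∈ Finset.Icc 1 n₀, δ n with hSdef
  rcases le_or_gt 1 S with hS | hS
  · rw [ENNReal.ofReal_of_nonpos (by linarith)]
    exact zero_le
  · have hone : (1:ENNReal) ≤ volume (Set.Icc (0:ℝ) 1 \ U) + volume U := by
      calc (1:ENNReal) = volume (Set.Icc (0:ℝ) 1) := by simp
        _ ≤ volume ((Set.Icc (0:ℝ) 1 \ U) ∪ U) := by
            apply measure_mono
            intro x hx
            by_cases hxU : x ∈ U
            · exact Or.inr hxU
            · exact Or.inl ⟨hx, hxU⟩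
        _ ≤ volume (Set.Icc (0:ℝ) 1 \ U) + volume U := measure_union_le _ _
    have hchain : ENNReal.ofReal (1 - S) + ENNReal.ofReal S ≤
        volume (Set.Icc (0:ℝ) 1 \ U) + ENNReal.ofReal S := by
      calc ENNReal.ofReal (1 - S) + ENNReal.ofReal S = ENNReal.ofReal 1 := by
            rw [← ENNReal.ofReal_add (by linarith) (by rw [hSdef]; linarith)]; norm_num
        _ = 1 := by simp
        _ ≤ volume (Set.Icc (0:ℝ) 1 \ U) + volume U := hone
        _ ≤ volume (Set.Icc (0:ℝ) 1 \ U) + ENNReal.ofReal S := by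
            exact add_le_add_right hvolU _
    exact (ENNReal.add_le_add_iff_right ENNReal.ofReal_ne_top).mp hchain
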